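/- arXiv:2307.04264 — 2 statements merged into one kernel-verified Lean document; each statement's English description precedes it below -/
import Mathlib

section
/- Let d = 1, σ > 0, δ > 0, x₀ = 0, and define K(x) = σ² + δ²/2 − x²/2 for |x| < δ and K(x) = σ² for |x| ≥ δ. Define f∞(x) = (m₁/√(2πσ²))·exp(−x²/(2σ²)) for |x| ≥ δ and f∞(x) = m₂/(2δ) for |x| < δ, where m₁, m₂ > 0 satisfy m₂/(2δ) = (m₁/√(2πσ²))·exp(−δ²/(2σ²)). Then f∞ is continuous and, for every x with |x| ≠ δ, satisfies x·f∞(x) + (K(x)·f∞(x))' = 0. -/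
/-- The piecewise Gaussian-uniform profile is a stationary solution of the 1D
surrogate Fokker–Planck equation away from the interface. -/
theorem stmt_3 (σ δ m₁ m₂ : ℝ) (hσ : 0 < σ) (hδ : 0 < δ)
    (hm₁ : 0 < m₁) (hm₂ : 0 < m₂)
    (hmatch : m₂ / (2*δ) = m₁ / Real.sqrt (2 * Real.pi * σ^2) * Real.exp (-δ^2/(2*σ^2)))
    (K finfty : ℝ → ℝ)
    (hK : ∀ x, K x = if |x| < δ then σ^2 + δ^2/2 - x^2/2 else σ^2)
    (hf : ∀ x, finfty x = if |x| < δ then m₂ / (2*δ)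
      else m₁ / Real.sqrt (2 * Real.pi * σ^2) * Real.exp (-x^2/(2*σ^2))) :
    Continuous finfty ∧
      ∀ x, |x| ≠ δ →
        x * finfty x + deriv (fun y => K y * finfty y) x = 0 := by
  set A := m₁ / Real.sqrt (2 * Real.pi * σ^2) with hA
  have hσ2 : (0:ℝ) < 2 * Real.pi * σ^2 := by positivity
  have hApos : 0 < A := by
    apply div_pos hm₁
    exact Real.sqrt_pos.mpr hσ2
  have hgmono : ∀ x y : ℝ, x^2 ≤ y^2 →
      A * Real.exp (-y^2/(2*σ^2)) ≤ A * Real.exp (-x^2/(2*σ^2)) := by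
    intro x y hxy
    apply mul_le_mul_of_nonneg_left _ hApos.le
    apply Real.exp_le_exp.mpr
    have h2 : (0:ℝ) < 2 * σ^2 := by positivity
    gcongr
  have hminform : ∀ x, finfty x = min (m₂ / (2*δ)) (A * Real.exp (-x^2/(2*σ^2))) := by
    intro x
    rw [hf x]
    by_cases h : |x| < δ
    · rw [if_pos h, eq_comm, min_eq_left]
      rw [hmatch]
      exact hgmono x δ (by nlinarith [abs_nonneg x, sq_abs x])
    · rw [if_neg h, eq_comm, min_eq_right]
      rw [hmatch]
      push_neg at h
      exact hgmono δ x (by nlinarith [abs_nonneg x, sq_abs x])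
  constructor
  · have : Continuous fun x => min (m₂ / (2*δ)) (A * Real.exp (-x^2/(2*σ^2))) := by
      apply Continuous.min continuous_const
      apply Continuous.mul continuous_const
      exact Real.continuous_exp.comp (((continuous_pow 2).neg).div_const (2*σ^2))
    exact this.congr fun x => (hminform x).symm
  · intro x hx
    by_cases h : |x| < δ
    · -- inner region: K*f = (σ²+δ²/2-y²/2) * c near x
      have hev : (fun y => K y * finfty y) =ᶠ[nhds x]
          (fun y => (σ^2 + δ^2/2 - y^2/2) * (m₂ / (2*δ))) := by
        have hopen : IsOpen {y : ℝ | |y| < δ} := isOpen_lt continuous_abs continuous_const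
        filter_upwards [hopen.mem_nhds h] with y hy
        rw [hK y, hf y, if_pos hy, if_pos hy]
      rw [hev.deriv_eq]
      have hd : HasDerivAt (fun y : ℝ => (σ^2 + δ^2/2 - y^2/2) * (m₂ / (2*δ)))
          (-x * (m₂ / (2*δ))) x := by
        have h1 : HasDerivAt (fun y : ℝ => σ^2 + δ^2/2 - y^2/2) (-x) x := by
          have := ((hasDerivAt_pow 2 x).div_const 2).const_sub (σ^2 + δ^2/2)
          convert this using 1
          · rfl
          · rfl
          ring
        exact h1.mul_const _
      rw [hd.deriv, hf x, if_pos h]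
      ring
    · -- outer region
      have hgt : δ < |x| := lt_of_le_of_ne (not_lt.mp h) (Ne.symm hx)
      have hev : (fun y => K y * finfty y) =ᶠ[nhds x]
          (fun y => σ^2 * (A * Real.exp (-y^2/(2*σ^2)))) := by
        have hopen : IsOpen {y : ℝ | δ < |y|} := isOpen_lt continuous_const continuous_abs
        filter_upwards [hopen.mem_nhds hgt] with y hy
        have hy' : ¬ |y| < δ := not_lt.mpr hy.le
        rw [hK y, hf y, if_neg hy', if_neg hy']
      rw [hev.deriv_eq]
      have hinner : HasDerivAt (fun y : ℝ => -y^2/(2*σ^2)) (-x/σ^2) x := by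
        have := ((hasDerivAt_pow 2 x).neg).div_const (2*σ^2)
        convert this using 1
        · rfl
        · rfl
        · rfl
        field_simp
        ring
      have hd : HasDerivAt (fun y : ℝ => σ^2 * (A * Real.exp (-y^2/(2*σ^2))))
          (-x * (A * Real.exp (-x^2/(2*σ^2)))) x := by
        have := ((hinner.exp.const_mul A).const_mul (σ^2))
        convert this using 1
        · rfl
        · rfl
        field_simp
      rw [hd.deriv, hf x, if_neg h]
      ring
end

section
/- Fix δ > 0 and m₂ ∈ (0,1). Then there exist unique m₁ > 0 and σ² > 0 solving the system m₁·(1 − erf(δ/√(2σ²))) + m₂ = 1 and (m₁/√(2πσ²))·exp(−δ²/(2σ²)) = m₂/(2δ). -/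
noncomputable def erf (z : ℝ) : ℝ :=
  (2 / Real.sqrt Real.pi) * ∫ s in (0:ℝ)..z, Real.exp (-s^2)

open MeasureTheory Real Set Filter Topology

noncomputable def Ig (t : ℝ) : ℝ := ∫ s in Set.Ioi t, Real.exp (-s^2)

lemma gauss_cont : Continuous fun s : ℝ => Real.exp (-s^2) := by continuity

lemma gauss_integrable : MeasureTheory.Integrable (fun s : ℝ => Real.exp (-s^2)) := by
  have := integrable_exp_neg_mul_sq (b := (1:ℝ)) one_pos
  simpa using this

lemma Ig_pos (t : ℝ) : 0 < Ig t := by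
  rw [Ig]
  rw [setIntegral_pos_iff_support_of_nonneg_ae]
  · have : Function.support (fun s : ℝ => Real.exp (-s^2)) = Set.univ := by
      ext x; simp [Function.support, Real.exp_ne_zero]
    rw [this]
    simp [Real.volume_Ioi]
  · filter_upwards with x using (Real.exp_pos _).le
  · exact gauss_integrable.integrableOn

lemma Ig_split {a b : ℝ} (h : a ≤ b) :
    Ig a = (∫ s in a..b, Real.exp (-s^2)) + Ig b := by
  rw [intervalIntegral.integral_of_le h, Ig, Ig,
    ← setIntegral_union (Set.Ioc_disjoint_Ioi le_rfl) measurableSet_Ioi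
      gauss_integrable.integrableOn gauss_integrable.integrableOn,
    Set.Ioc_union_Ioi_eq_Ioi h]

lemma Ig_eq (t : ℝ) : Ig t = Ig 0 - ∫ s in (0:ℝ)..t, Real.exp (-s^2) := by
  rcases le_total (0:ℝ) t with h | h
  · have := Ig_split h; linarith
  · have h1 := Ig_split h
    have h2 : (∫ s in (0:ℝ)..t, Real.exp (-s^2)) = -∫ s in t..(0:ℝ), Real.exp (-s^2) :=
      intervalIntegral.integral_symm _ _
    linarith

lemma Ig_zero : Ig 0 = Real.sqrt Real.pi / 2 := by
  have := integral_gaussian_Ioi (1:ℝ)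
  rw [Ig]
  simpa using this

lemma hasDerivAt_Ig (t : ℝ) : HasDerivAt Ig (-(Real.exp (-t^2))) t := by
  have h1 : HasDerivAt (fun u => ∫ s in (0:ℝ)..u, Real.exp (-s^2)) (Real.exp (-t^2)) t :=
    intervalIntegral.integral_hasDerivAt_right
      gauss_integrable.intervalIntegrable
      gauss_cont.aestronglyMeasurable.stronglyMeasurableAtFilter
      gauss_cont.continuousAt
  have h2 := h1.const_sub (Ig 0)
  exact h2.congr_of_eventuallyEq (Filter.Eventually.of_forall fun u => Ig_eq u)

lemma Ig_continuous : Continuous Ig :=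
  continuous_iff_continuousAt.2 fun t => (hasDerivAt_Ig t).continuousAt

lemma integrable_mul_gauss : MeasureTheory.Integrable (fun s : ℝ => s * Real.exp (-s^2)) := by
  have := integrable_mul_exp_neg_mul_sq (b := (1:ℝ)) one_pos
  simpa using this

lemma tail_integral (t : ℝ) :
    ∫ s in Set.Ioi t, s * Real.exp (-s^2) = Real.exp (-t^2) / 2 := by
  have hderiv : ∀ x ∈ Set.Ioi t, HasDerivAt (fun u : ℝ => -(Real.exp (-u^2) / 2))
      (x * Real.exp (-x^2)) x := by
    intro x _
    have h1 : HasDerivAt (fun u : ℝ => -u^2) (-(2*x)) x := by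
      exact (hasDerivAt_pow 2 x).neg.congr_deriv (show _ = -(2*x) by norm_num)
    have h2 := (h1.exp.div_const 2).neg
    exact h2.congr_deriv (by ring)
  have htend : Tendsto (fun u : ℝ => -(Real.exp (-u^2) / 2)) atTop (𝓝 0) := by
    have h3 : Tendsto (fun u : ℝ => -u^2) atTop atBot := by
      have h4 : Tendsto (fun u : ℝ => u^2) atTop atTop := tendsto_pow_atTop two_ne_zero
      exact tendsto_neg_atBot_iff.2 h4
    have := (Real.tendsto_exp_atBot.comp h3).div_const 2
    simpa using this.neg
  have hcont : ContinuousWithinAt (fun u : ℝ => -(Real.exp (-u^2) / 2)) (Set.Ici t) t :=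
    (by continuity : Continuous fun u : ℝ => -(Real.exp (-u^2) / 2)).continuousWithinAt
  have := integral_Ioi_of_hasDerivAt_of_tendsto hcont hderiv
    (integrable_mul_gauss.integrableOn) htend
  rw [this]; ring

lemma Ig_le {t : ℝ} (ht : 0 < t) : Ig t ≤ Real.exp (-t^2) / (2*t) := by
  have hmono : Ig t ≤ ∫ s in Set.Ioi t, (s/t) * Real.exp (-s^2) := by
    rw [Ig]
    apply setIntegral_mono_on gauss_integrable.integrableOn
      ((integrable_mul_gauss.div_const t).congr ?_).integrableOn measurableSet_Ioi
    · intro s hs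
      have hs1 : 1 ≤ s / t := (one_le_div ht).2 (le_of_lt hs)
      nlinarith [Real.exp_pos (-s^2)]
    · filter_upwards with s; ring
  have heq : ∫ s in Set.Ioi t, (s/t) * Real.exp (-s^2)
      = (∫ s in Set.Ioi t, s * Real.exp (-s^2)) / t := by
    rw [← integral_div]
    congr 1; ext s; ring
  rw [heq, tail_integral] at hmono
  calc Ig t ≤ Real.exp (-t^2) / 2 / t := hmono
    _ = Real.exp (-t^2) / (2*t) := by ring

/-- The key auxiliary function. -/
noncomputable def gfun (t : ℝ) : ℝ := t * Real.exp (-t^2) / Ig t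

lemma gfun_zero : gfun 0 = 0 := by simp [gfun]

lemma gfun_cont : Continuous gfun :=
  (continuous_id.mul gauss_cont).div Ig_continuous fun t => (Ig_pos t).ne'

lemma hasDerivAt_gfun (t : ℝ) : HasDerivAt gfun
    (((1 - 2*t^2) * Real.exp (-t^2) * Ig t + t * Real.exp (-t^2) * Real.exp (-t^2))
      / (Ig t)^2) t := by
  have h1 : HasDerivAt (fun u : ℝ => Real.exp (-u^2)) (-(2*t) * Real.exp (-t^2)) t := by
    have h0 : HasDerivAt (fun u : ℝ => -u^2) (-(2*t)) t := by
      exact (hasDerivAt_pow 2 t).neg.congr_deriv (show _ = -(2*t) by norm_num)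
    convert h0.exp using 1
    ring
  have hn : HasDerivAt (fun u : ℝ => u * Real.exp (-u^2))
      (1 * Real.exp (-t^2) + t * (-(2*t) * Real.exp (-t^2))) t :=
    (hasDerivAt_id t).mul h1
  have := hn.div (hasDerivAt_Ig t) (Ig_pos t).ne'
  exact this.congr_deriv (by ring)

lemma gfun_deriv_pos {t : ℝ} (ht : 0 < t) :
    0 < ((1 - 2*t^2) * Real.exp (-t^2) * Ig t + t * Real.exp (-t^2) * Real.exp (-t^2))
      / (Ig t)^2 := by
  have hI := Ig_pos t
  have hE := Real.exp_pos (-t^2)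
  apply div_pos _ (by positivity)
  rcases le_or_gt 0 (1 - 2*t^2) with h | h
  · have h1 : 0 ≤ (1 - 2*t^2) * Real.exp (-t^2) * Ig t := by positivity
    nlinarith [mul_pos (mul_pos ht hE) hE]
  · have hle := Ig_le ht
    have h2 : 2*t*Ig t ≤ Real.exp (-t^2) := by
      rw [le_div_iff₀ (by positivity : (0:ℝ) < 2*t)] at hle
      nlinarith
    nlinarith [mul_pos hE hE, mul_pos ht hI,
      mul_nonneg (sub_nonneg.2 h2) (mul_nonneg (by linarith : (0:ℝ) ≤ 2*t^2 - 1) hE.le)]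

lemma gfun_strictMono : StrictMonoOn gfun (Set.Ici 0) := by
  apply strictMonoOn_of_deriv_pos (convex_Ici 0) gfun_cont.continuousOn
  intro t ht
  rw [interior_Ici] at ht
  rw [(hasDerivAt_gfun t).deriv]
  exact gfun_deriv_pos ht

lemma gfun_lb {t : ℝ} (ht : 0 < t) : 2*t^2 ≤ gfun t := by
  have hI := Ig_pos t
  have hE := Real.exp_pos (-t^2)
  rw [gfun, le_div_iff₀ hI]
  have hle := Ig_le ht
  rw [le_div_iff₀ (by positivity : (0:ℝ) < 2*t)] at hle
  nlinarith [mul_le_mul_of_nonneg_left hle ht.le]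

lemma one_sub_erf (t : ℝ) : 1 - erf t = (2 / Real.sqrt Real.pi) * Ig t := by
  have hsπ : (0:ℝ) < Real.sqrt Real.pi := Real.sqrt_pos.2 Real.pi_pos
  rw [erf, Ig_eq t, Ig_zero]
  field_simp

/-- Existence and uniqueness of (m₁, σ²) solving the 1D matching system. -/
theorem stmt_5 (δ m₂ : ℝ) (hδ : 0 < δ) (hm₂ : m₂ ∈ Set.Ioo (0:ℝ) 1) :
    ∃! p : ℝ × ℝ, 0 < p.1 ∧ 0 < p.2 ∧
      p.1 * (1 - erf (δ / Real.sqrt (2 * p.2))) + m₂ = 1 ∧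
      p.1 / Real.sqrt (2 * Real.pi * p.2) * Real.exp (-δ^2/(2*p.2)) = m₂ / (2*δ) := by
  obtain ⟨hm0, hm1⟩ := hm₂
  have hsπ : (0:ℝ) < Real.sqrt Real.pi := Real.sqrt_pos.2 Real.pi_pos
  have h1m : (0:ℝ) < 1 - m₂ := by linarith
  set C : ℝ := m₂ / (1 - m₂) with hC
  have hCpos : 0 < C := div_pos hm0 h1m
  -- existence of t₀ > 0 with gfun t₀ = C
  set T : ℝ := Real.sqrt C + 1 with hT
  have hTpos : 0 < T := by positivity
  have hgT : C ≤ gfun T := by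
    have h2 := gfun_lb hTpos
    have h3 : C ≤ T^2 := by
      have h4 := Real.sq_sqrt hCpos.le
      nlinarith [Real.sqrt_nonneg C]
    nlinarith
  have hmem : C ∈ Set.Icc (gfun 0) (gfun T) := by
    rw [gfun_zero]; exact ⟨hCpos.le, hgT⟩
  obtain ⟨t₀, ht₀mem, ht₀⟩ := intermediate_value_Icc hTpos.le gfun_cont.continuousOn hmem
  have ht₀pos : 0 < t₀ := by
    rcases ht₀mem.1.lt_or_eq with h | h
    · exact h
    · exfalso; rw [← h, gfun_zero] at ht₀; exact hCpos.ne ht₀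
  have hIt₀ := Ig_pos t₀
  -- the key algebraic identity from gfun t₀ = C
  have hkey : (1 - m₂) * (t₀ * Real.exp (-t₀^2)) = m₂ * Ig t₀ := by
    have : t₀ * Real.exp (-t₀^2) / Ig t₀ = m₂ / (1 - m₂) := ht₀
    field_simp at this
    linarith
  -- the candidate solution
  refine ⟨((1 - m₂) * Real.sqrt Real.pi / (2 * Ig t₀), δ^2 / (2 * t₀^2)), ⟨?_, ?_, ?_, ?_⟩, ?_⟩
  · positivity
  · positivity
  · -- first equation
    have hsqrt : Real.sqrt (2 * (δ^2 / (2 * t₀^2))) = δ / t₀ := by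
      have : 2 * (δ^2 / (2 * t₀^2)) = (δ / t₀)^2 := by field_simp
      rw [this, Real.sqrt_sq (by positivity)]
    simp only [hsqrt]
    have : δ / (δ / t₀) = t₀ := by field_simp
    rw [this, one_sub_erf]
    field_simp
    ring
  · -- second equation
    have hsqrt2 : Real.sqrt (2 * Real.pi * (δ^2 / (2 * t₀^2))) = δ * Real.sqrt Real.pi / t₀ := by
      have h5 : 2 * Real.pi * (δ^2 / (2 * t₀^2)) = (δ * Real.sqrt Real.pi / t₀)^2 := by
        field_simp
        linear_combination (-1) * Real.sq_sqrt Real.pi_pos.le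
      rw [h5, Real.sqrt_sq (by positivity)]
    have hexp : -δ^2 / (2 * (δ^2 / (2 * t₀^2))) = -t₀^2 := by field_simp
    simp only [hsqrt2, hexp]
    field_simp
    linear_combination hkey
  · -- uniqueness
    rintro ⟨m₁', s'⟩ ⟨hm₁', hs', heq1, heq2⟩
    simp only at hm₁' hs' heq1 heq2 ⊢
    have hs2 : (0:ℝ) < 2 * s' := by linarith
    have hsq : 0 < Real.sqrt (2 * s') := Real.sqrt_pos.2 hs2
    obtain ⟨t, htdef⟩ : ∃ t : ℝ, t = δ / Real.sqrt (2 * s') := ⟨_, rfl⟩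
    have htpos : 0 < t := htdef ▸ div_pos hδ hsq
    have hIt := Ig_pos t
    have hs'eq : s' = δ^2 / (2 * t^2) := by
      have h7 : (Real.sqrt (2 * s'))^2 = 2 * s' := Real.sq_sqrt hs2.le
      have ht2 : t^2 = δ^2 / (2 * s') := by
        rw [htdef, div_pow, h7]
      rw [ht2]
      field_simp [hδ.ne', hs'.ne']
    rw [← htdef] at heq1
    rw [one_sub_erf] at heq1
    have hm₁'eq : m₁' = (1 - m₂) * Real.sqrt Real.pi / (2 * Ig t) := by
      field_simp at heq1 ⊢
      linear_combination heq1
    have hsqrt2 : Real.sqrt (2 * Real.pi * s') = δ * Real.sqrt Real.pi / t := by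
      have h5 : 2 * Real.pi * s' = (δ * Real.sqrt Real.pi / t)^2 := by
        rw [hs'eq]
        field_simp
        linear_combination (-1) * Real.sq_sqrt Real.pi_pos.le
      rw [h5, Real.sqrt_sq (by positivity)]
    have hexp : -δ^2 / (2 * s') = -t^2 := by
      rw [hs'eq]; field_simp
    rw [hsqrt2, hexp, hm₁'eq] at heq2
    have h8 : (1 - m₂) * (t * Real.exp (-t^2)) = m₂ * Ig t := by
      field_simp at heq2
      apply mul_left_cancel₀ (by positivity : (0:ℝ) < 2 * δ * Real.sqrt Real.pi).ne'
      linear_combination (2 * δ * Real.sqrt Real.pi) * heq2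
    have hgt : gfun t = C := by
      rw [gfun, hC, div_eq_div_iff hIt.ne' h1m.ne']
      linear_combination h8
    have hteq : t = t₀ := gfun_strictMono.injOn (le_of_lt htpos) (le_of_lt ht₀pos)
      (by rw [hgt, ht₀])
    rw [Prod.mk.injEq]
    refine ⟨by rw [hm₁'eq, hteq], by rw [hs'eq, hteq]⟩
end
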